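/- Let g ≥ 4. Let 𝒫 be the set of g-tuples (m₁, …, m_g) of positive integers with gcd(m₁, …, m_g) = 1. Let ∼ be the equivalence relation on 𝒫 generated by the relation: (n₁, …, n_g) is related to (n₁′, …, n_g′) whenever there exists j with 2 ≤ j ≤ g such that n_j′ = n_j and gcd_{k ≠ j} n_k′ = gcd_{k ≠ j} n_k. Then every element of 𝒫 is equivalent to (1, 1, …, 1); in particular ∼ has exactly one equivalence class. -/
import Mathlib


/-- The set `𝒫` of `g`-tuples of positive integers with gcd `1`. -/
def TupleP (g : ℕ) := {m : Fin g → ℕ // (∀ j, 0 < m j) ∧ Finset.univ.gcd m = 1}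

/-- The generating relation: `u` and `v` are related if there is `j` with `2 ≤ j ≤ g`
(`j.val ≠ 0` in `0`-based indexing) such that `u_j = v_j` and the gcd of the entries of `u`
other than the `j`-th equals the gcd of the entries of `v` other than the `j`-th. -/
def RelP (g : ℕ) (u v : TupleP g) : Prop :=
  ∃ j : Fin g, j.val ≠ 0 ∧ u.1 j = v.1 j ∧
    (Finset.univ.erase j).gcd u.1 = (Finset.univ.erase j).gcd v.1

private lemma gcd_one_of_mem {g : ℕ} (s : Finset (Fin g)) (f : Fin g → ℕ) (i : Fin g)
    (hi : i ∈ s) (hfi : f i = 1) : s.gcd f = 1 :=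
  Nat.dvd_one.mp (hfi ▸ Finset.gcd_dvd hi)

/-- For `g ≥ 4`, every element of `𝒫` is equivalent to `(1, …, 1)` under the equivalence
relation generated by `RelP`; in particular there is exactly one equivalence class. -/
theorem stmt8 (g : ℕ) (hg : 4 ≤ g) :
    ∃ y : TupleP g, y.1 = (fun _ => 1) ∧ ∀ x : TupleP g, Relation.EqvGen (RelP g) x y := by
  set j0 : Fin g := ⟨0, by omega⟩ with hj0
  set j1 : Fin g := ⟨1, by omega⟩ with hj1
  set j2 : Fin g := ⟨2, by omega⟩ with hj2
  have h01 : j0 ≠ j1 := by simp [hj0, hj1, Fin.ext_iff]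
  have h02 : j0 ≠ j2 := by simp [hj0, hj2, Fin.ext_iff]
  have h12 : j1 ≠ j2 := by simp [hj1, hj2, Fin.ext_iff]
  have hy : (∀ j, 0 < (fun _ : Fin g => 1) j) ∧ Finset.univ.gcd (fun _ : Fin g => 1) = 1 :=
    ⟨fun _ => one_pos, gcd_one_of_mem _ _ j0 (Finset.mem_univ _) rfl⟩
  refine ⟨⟨fun _ => 1, hy⟩, rfl, fun x => ?_⟩
  set d : ℕ := (Finset.univ.erase j1).gcd x.1 with hd
  have hd0 : d ≠ 0 := by
    intro h
    have h2 := Finset.gcd_eq_zero_iff.mp h j0 (by simp [h01])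
    have h3 := x.2.1 j0
    omega
  have hdpos : 0 < d := Nat.pos_of_ne_zero hd0
  -- key: gcd (x j1) d = 1
  have gcd_split : ∀ f : Fin g → ℕ,
      Finset.univ.gcd f = GCDMonoid.gcd (f j1) ((Finset.univ.erase j1).gcd f) := by
    intro f
    rw [← Finset.gcd_insert, Finset.insert_erase (Finset.mem_univ j1)]
  have hsplit : GCDMonoid.gcd (x.1 j1) d = 1 := by
    rw [← gcd_split]; exact x.2.2
  -- intermediate tuples
  set v : Fin g → ℕ := fun i => if i = j1 then x.1 j1 else d with hv
  set w : Fin g → ℕ := fun i => if i = j2 then d else 1 with hw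
  have hvgcd1 : (Finset.univ.erase j1).gcd v = d := by
    apply Nat.dvd_antisymm
    · have : v j0 = d := by simp [hv, h01]
      exact this ▸ Finset.gcd_dvd (by simp [h01])
    · exact Finset.dvd_gcd fun b hb => by
        simp only [hv]
        rw [if_neg (Finset.ne_of_mem_erase hb)]
  have hvP : (∀ j, 0 < v j) ∧ Finset.univ.gcd v = 1 := by
    constructor
    · intro j
      by_cases h : j = j1 <;> simp [hv, h, x.2.1 j1, hdpos]
    · rw [gcd_split, hvgcd1]
      simpa [hv] using hsplit
  have hwP : (∀ j, 0 < w j) ∧ Finset.univ.gcd w = 1 := by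
    constructor
    · intro j
      by_cases h : j = j2 <;> simp [hw, h, hdpos]
    · exact gcd_one_of_mem _ _ j0 (Finset.mem_univ _) (by simp [hw, h02])
  have step1 : RelP g x ⟨v, hvP⟩ := by
    refine ⟨j1, by simp [hj1], by simp [hv], ?_⟩
    rw [hvgcd1]
  have step2 : RelP g ⟨v, hvP⟩ ⟨w, hwP⟩ := by
    refine ⟨j2, by simp [hj2], by simp [hv, hw, (Ne.symm h12)], ?_⟩
    have hvg : (Finset.univ.erase j2).gcd v = 1 := by
      apply Nat.dvd_one.mp
      have hdvd0 : (Finset.univ.erase j2).gcd v ∣ d := by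
        have : v j0 = d := by simp [hv, h01]
        exact this ▸ Finset.gcd_dvd (by simp [h02])
      have hdvd1 : (Finset.univ.erase j2).gcd v ∣ x.1 j1 := by
        have : v j1 = x.1 j1 := by simp [hv]
        exact this ▸ Finset.gcd_dvd (by simp [h12])
      exact hsplit ▸ dvd_gcd hdvd1 hdvd0
    have hwg : (Finset.univ.erase j2).gcd w = 1 :=
      gcd_one_of_mem _ _ j0 (by simp [h02]) (by simp [hw, h02])
    rw [hvg, hwg]
  have step3 : RelP g ⟨w, hwP⟩ ⟨fun _ => 1, hy⟩ := by
    refine ⟨j1, by simp [hj1], by simp [hw, h12], ?_⟩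
    have h1 : (Finset.univ.erase j1).gcd w = 1 :=
      gcd_one_of_mem _ _ j0 (by simp [h01]) (by simp [hw, h02])
    have h2 : (Finset.univ.erase j1).gcd (fun _ : Fin g => 1) = 1 :=
      gcd_one_of_mem _ _ j0 (by simp [h01]) rfl
    rw [h1, h2]
  exact Relation.EqvGen.trans _ _ _ (Relation.EqvGen.rel _ _ step1)
    (Relation.EqvGen.trans _ _ _ (Relation.EqvGen.rel _ _ step2)
      (Relation.EqvGen.rel _ _ step3))
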